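/- The rank R induces an order isomorphism between the quotient of the set of simple types by ∼, ordered by the relation induced by ≼, and the set of ordinals {α | 0 < α < ε₀} with its usual order; in particular, ≼ induces a well-ordering of order type ε₀ on the ∼-classes of simple types. -/

import Mathlib

/-- Simple types over a single base type `N`. -/
inductive SType : Type
  | N : SType
  | arrow : SType → SType → SType
  | prod : SType → SType → SType
  deriving DecidableEq

/-- Trivial isomorphism: the least congruence on simple types containing the
four generating equivalences. -/
inductive TrivIso : SType → SType → Prop
  | refl (σ : SType) : TrivIso σ σ
  | symm {σ τ : SType} : TrivIso σ τ → TrivIso τ σ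
  | trans {σ τ ρ : SType} : TrivIso σ τ → TrivIso τ ρ → TrivIso σ ρ
  | arrowCongr {σ σ' τ τ' : SType} :
      TrivIso σ σ' → TrivIso τ τ' → TrivIso (.arrow σ τ) (.arrow σ' τ')
  | prodCongr {σ σ' τ τ' : SType} :
      TrivIso σ σ' → TrivIso τ τ' → TrivIso (.prod σ τ) (.prod σ' τ')
  | curry (ρ σ τ : SType) :
      TrivIso (.arrow (.prod ρ σ) τ) (.arrow ρ (.arrow σ τ))
  | distrib (ρ σ τ : SType) :
      TrivIso (.arrow ρ (.prod σ τ)) (.prod (.arrow ρ σ) (.arrow ρ τ))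
  | assoc (ρ σ τ : SType) :
      TrivIso (.prod ρ (.prod σ τ)) (.prod (.prod ρ σ) τ)
  | comm (σ τ : SType) : TrivIso (.prod σ τ) (.prod τ σ)

universe u

namespace Ordinal

/-- Hessenberg natural sum, as formerly defined in Mathlib (`Ordinal.nadd`, since removed). -/
noncomputable def nadd : Ordinal.{u} → Ordinal.{u} → Ordinal.{u}
  | a, b =>
    max (blsub.{u, u} a fun a' _ => nadd a' b) (blsub.{u, u} b fun b' _ => nadd a b')
termination_by o₁ o₂ => (o₁, o₂)

end Ordinal

namespace SType

/-- Auxiliary measure justifying the well-founded recursion defining the rank. -/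
def meas : SType → ℕ
  | N => 2
  | prod a b => meas a * meas b
  | arrow a b => (meas a + 1) * meas b

theorem two_le_meas (σ : SType) : 2 ≤ meas σ := by
  induction σ with
  | N => simp [meas]
  | arrow a b iha ihb => simp only [meas]; nlinarith
  | prod a b iha ihb => simp only [meas]; nlinarith

/-- The ordinal rank of a simple type, defined by well-founded recursion:
`R N = 1`, `R (σ × τ) = R σ ♯ R τ` (Hessenberg natural sum),
`R (σ → N) = ω ^ R σ`, `R (σ → (τ × ρ)) = R (σ → τ) ♯ R (σ → ρ)`,
`R (σ → (τ → ρ)) = R ((σ × τ) → ρ)`. -/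
noncomputable def R : SType → Ordinal.{0}
  | N => 1
  | prod a b => Ordinal.nadd (R a) (R b)
  | arrow a N => Ordinal.omega0 ^ R a
  | arrow a (prod b c) => Ordinal.nadd (R (arrow a b)) (R (arrow a c))
  | arrow a (arrow b c) => R (arrow (prod a b) c)
termination_by σ => meas σ
decreasing_by
  · simp only [meas]; nlinarith [two_le_meas a, two_le_meas b]
  · simp only [meas]; nlinarith [two_le_meas a, two_le_meas b]
  · simp only [meas]; nlinarith [two_le_meas a]
  · simp only [meas]
    have h : meas b < meas b * meas c := by nlinarith [two_le_meas b, two_le_meas c]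
    exact mul_lt_mul_of_pos_left h (by positivity)
  · simp only [meas]
    have h : meas c < meas b * meas c := by nlinarith [two_le_meas b, two_le_meas c]
    exact mul_lt_mul_of_pos_left h (by positivity)
  · simp only [meas]; nlinarith [two_le_meas a, two_le_meas b, two_le_meas c]

end SType

open SType (R)

/-- `ε₀`, the least ordinal `α` with `ω ^ α = α`. -/
noncomputable def eps0 : Ordinal.{0} := sInf {a : Ordinal | Ordinal.omega0 ^ a = a}

/-- The setoid of simple types under trivial isomorphism. -/
def trivSetoid : Setoid SType :=
  ⟨TrivIso, ⟨TrivIso.refl, TrivIso.symm, TrivIso.trans⟩⟩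


open Ordinal SType
notation:65 a:65 " ♯ " b:66 => Ordinal.nadd a b

/-! ### Basic theory of the natural sum -/

private theorem nadd_def' (a b : Ordinal.{0}) :
    a ♯ b = max (blsub.{0, 0} a fun a' _ => a' ♯ b) (blsub.{0, 0} b fun b' _ => a ♯ b') := by
  rw [nadd]

private theorem lt_nadd_iff {a b c : Ordinal.{0}} :
    a < b ♯ c ↔ (∃ b' < b, a ≤ b' ♯ c) ∨ ∃ c' < c, a ≤ b ♯ c' := by
  rw [nadd_def']
  simp [lt_blsub_iff]

private theorem nadd_le_iff {a b c : Ordinal.{0}} :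
    b ♯ c ≤ a ↔ (∀ b' < b, b' ♯ c < a) ∧ ∀ c' < c, b ♯ c' < a := by
  rw [nadd_def']
  simp [blsub_le_iff]

private theorem nadd_lt_nadd_left {b c : Ordinal.{0}} (h : b < c) (a : Ordinal.{0}) :
    a ♯ b < a ♯ c :=
  lt_nadd_iff.2 (Or.inr ⟨b, h, le_rfl⟩)

private theorem nadd_lt_nadd_right {b c : Ordinal.{0}} (h : b < c) (a : Ordinal.{0}) :
    b ♯ a < c ♯ a :=
  lt_nadd_iff.2 (Or.inl ⟨b, h, le_rfl⟩)

private theorem nadd_le_nadd_left {b c : Ordinal.{0}} (h : b ≤ c) (a : Ordinal.{0}) :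
    a ♯ b ≤ a ♯ c := by
  rcases h.lt_or_eq with h | rfl
  · exact (nadd_lt_nadd_left h a).le
  · exact le_rfl

private theorem nadd_le_nadd_right {b c : Ordinal.{0}} (h : b ≤ c) (a : Ordinal.{0}) :
    b ♯ a ≤ c ♯ a := by
  rcases h.lt_or_eq with h | rfl
  · exact (nadd_lt_nadd_right h a).le
  · exact le_rfl

private theorem nadd_comm_le : ∀ a b : Ordinal.{0}, a ♯ b ≤ b ♯ a := by
  intro a
  induction a using Ordinal.induction with
  | h a IHa =>
  intro b
  induction b using Ordinal.induction with
  | h b IHb =>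
  rw [nadd_le_iff]
  exact ⟨fun a' ha' => (IHa a' ha' b).trans_lt (nadd_lt_nadd_left ha' b),
    fun b' hb' => (IHb b' hb').trans_lt (nadd_lt_nadd_right hb' a)⟩

private theorem nadd_comm (a b : Ordinal.{0}) : a ♯ b = b ♯ a :=
  le_antisymm (nadd_comm_le a b) (nadd_comm_le b a)

private theorem self_le_nadd' (a b : Ordinal.{0}) : a ≤ a ♯ b := by
  induction a using Ordinal.induction with
  | h a IH =>
  refine le_of_forall_lt fun x hx => ?_
  exact (IH x hx).trans_lt (nadd_lt_nadd_right hx b)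

private theorem nadd_zero (a : Ordinal.{0}) : a ♯ 0 = a := by
  induction a using Ordinal.induction with
  | h a IH =>
  refine le_antisymm ?_ (self_le_nadd' a 0)
  rw [nadd_le_iff]
  exact ⟨fun a' ha' => by rw [IH a' ha']; exact ha',
    fun c' hc' => absurd hc' (not_lt_of_ge (zero_le (a := c')))⟩

private theorem zero_nadd (a : Ordinal.{0}) : 0 ♯ a = a := by
  rw [nadd_comm, nadd_zero]

private theorem add_le_nadd (a b : Ordinal.{0}) : a + b ≤ a ♯ b := by
  induction b using Ordinal.induction with
  | h b IH =>
  refine le_of_forall_lt fun x hx => ?_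
  rcases lt_or_ge x a with h | h
  · exact h.trans_le (self_le_nadd' a b)
  · have hxe : x = a + (x - a) := (Ordinal.add_sub_cancel_of_le h).symm
    have hlt : x - a < b := by rw [hxe] at hx; exact (add_lt_add_iff_left _).1 hx
    rw [hxe]; exact (IH _ hlt).trans_lt (nadd_lt_nadd_left hlt a)

private theorem nadd_assoc_le : ∀ a b c : Ordinal.{0}, a ♯ b ♯ c ≤ a ♯ (b ♯ c) := by
  intro a
  induction a using Ordinal.induction with
  | h a IHa =>
  intro b
  induction b using Ordinal.induction with
  | h b IHb =>
  intro c
  induction c using Ordinal.induction with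
  | h c IHc =>
  rw [nadd_le_iff]
  constructor
  · intro x hx
    rcases lt_nadd_iff.1 hx with ⟨a', ha', hx'⟩ | ⟨b', hb', hx'⟩
    · exact ((nadd_le_nadd_right hx' c).trans (IHa a' ha' b c)).trans_lt
        (nadd_lt_nadd_right ha' _)
    · exact ((nadd_le_nadd_right hx' c).trans (IHb b' hb' c)).trans_lt
        (nadd_lt_nadd_left (nadd_lt_nadd_right hb' c) a)
  · intro c' hc'
    exact (IHc c' hc').trans_lt (nadd_lt_nadd_left (nadd_lt_nadd_left hc' b) a)

private theorem nadd_assoc (a b c : Ordinal.{0}) : a ♯ b ♯ c = a ♯ (b ♯ c) :=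
  le_antisymm (nadd_assoc_le a b c) (by
    calc a ♯ (b ♯ c) = c ♯ b ♯ a := by rw [nadd_comm a, nadd_comm b]
      _ ≤ c ♯ (b ♯ a) := nadd_assoc_le c b a
      _ = a ♯ b ♯ c := by rw [nadd_comm c, nadd_comm b])

private theorem nadd_left_cancel {a b c : Ordinal.{0}} (h : a ♯ b = a ♯ c) : b = c := by
  rcases lt_trichotomy b c with hbc | hbc | hbc
  · exact absurd h (nadd_lt_nadd_left hbc a).ne
  · exact hbc
  · exact absurd h (nadd_lt_nadd_left hbc a).ne'

/-! ### Ordinal arithmetic preliminaries: nadd and omega powers -/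

private theorem lt_add1 (x : Ordinal.{0}) : x < x + 1 := by
  rw [add_one_eq_succ]; exact Order.lt_succ x

private theorem self_le_nadd (x y : Ordinal.{0}) : x ≤ x ♯ y :=
  (le_self_add : x ≤ x + y).trans (add_le_nadd x y)

/-- Decomposition of an ordinal `x < ω^e * m + a`. -/
private theorem decomp_lt {e : Ordinal.{0}} (m : ℕ) {a x : Ordinal.{0}} (ha : a < ω ^ e)
    (hx : x < ω ^ e * m + a) :
    ∃ (k : ℕ) (c : Ordinal.{0}), c < ω ^ e ∧ x = ω ^ e * k + c ∧
      (k < m ∨ (k = m ∧ c < a)) := by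
  have hω : (0 : Ordinal) < ω ^ e := opow_pos e omega0_pos
  by_cases h : x < ω ^ e * m
  · have hdiv : x / ω ^ e < (m : Ordinal) := (Ordinal.div_lt hω.ne').2 h
    obtain ⟨k, hk⟩ := Ordinal.lt_omega0.1 (hdiv.trans (nat_lt_omega0 m))
    refine ⟨k, x % ω ^ e, Ordinal.mod_lt x hω.ne', ?_, Or.inl ?_⟩
    · rw [← hk, Ordinal.div_add_mod]
    · rw [hk] at hdiv; exact_mod_cast hdiv
  · push_neg at h
    have hxe : x = ω ^ e * m + (x - ω ^ e * m) := (Ordinal.add_sub_cancel_of_le h).symm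
    have hca : x - ω ^ e * m < a := by
      rw [hxe] at hx; exact (add_lt_add_iff_left _).1 hx
    exact ⟨m, _, hca.trans ha, hxe, Or.inr ⟨rfl, hca⟩⟩

private theorem nadd_merge_aux (e : Ordinal.{0})
    (hP : ∀ a b : Ordinal.{0}, a < ω ^ e → b < ω ^ e → a ♯ b < ω ^ e) :
    ∀ (μ : Ordinal.{0}) (m n : ℕ) (a b : Ordinal.{0}), a < ω ^ e → b < ω ^ e →
      ω ^ e * ((m + n : ℕ) : Ordinal) + (a ♯ b) < μ →
      (ω ^ e * m + a) ♯ (ω ^ e * n + b) = ω ^ e * ((m + n : ℕ) : Ordinal) + (a ♯ b) := by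
  have hω : (0 : Ordinal) < ω ^ e := opow_pos e omega0_pos
  intro μ
  induction μ using Ordinal.induction with
  | h μ IH =>
  intro m n a b ha hb hμ
  have key₁ : ∀ (k : ℕ) (c : Ordinal.{0}), c < ω ^ e → (k < m ∨ (k = m ∧ c < a)) →
      (ω ^ e * k + c) ♯ (ω ^ e * n + b) < ω ^ e * ((m + n : ℕ) : Ordinal) + (a ♯ b) := by
    intro k c hc hkc
    have hlt : ω ^ e * ((k + n : ℕ) : Ordinal) + (c ♯ b) <
        ω ^ e * ((m + n : ℕ) : Ordinal) + (a ♯ b) := by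
      rcases hkc with hk | ⟨rfl, hca⟩
      · calc ω ^ e * ((k + n : ℕ) : Ordinal) + (c ♯ b)
            < ω ^ e * ((k + n : ℕ) : Ordinal) + ω ^ e := add_lt_add_right (hP c b hc hb) _
          _ = ω ^ e * (((k + n : ℕ) : Ordinal) + 1) := by rw [mul_add_one]
          _ ≤ ω ^ e * ((m + n : ℕ) : Ordinal) := by
              apply mul_le_mul_right
              have : (((k + n : ℕ) : Ordinal) + 1) = ((k + n + 1 : ℕ) : Ordinal) := by push_cast; ring
              rw [this]
              exact Nat.cast_le.2 (by omega)
          _ ≤ ω ^ e * ((m + n : ℕ) : Ordinal) + (a ♯ b) := le_self_add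
      · exact add_lt_add_right (nadd_lt_nadd_right hca b) _
    have heq := IH (ω ^ e * ((m + n : ℕ) : Ordinal) + (a ♯ b)) hμ k n c b hc hb hlt
    rw [heq]; exact hlt
  have key₂ : ∀ (k : ℕ) (c : Ordinal.{0}), c < ω ^ e → (k < n ∨ (k = n ∧ c < b)) →
      (ω ^ e * m + a) ♯ (ω ^ e * k + c) < ω ^ e * ((m + n : ℕ) : Ordinal) + (a ♯ b) := by
    intro k c hc hkc
    have hlt : ω ^ e * ((m + k : ℕ) : Ordinal) + (a ♯ c) <
        ω ^ e * ((m + n : ℕ) : Ordinal) + (a ♯ b) := by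
      rcases hkc with hk | ⟨rfl, hcb⟩
      · calc ω ^ e * ((m + k : ℕ) : Ordinal) + (a ♯ c)
            < ω ^ e * ((m + k : ℕ) : Ordinal) + ω ^ e := add_lt_add_right (hP a c ha hc) _
          _ = ω ^ e * (((m + k : ℕ) : Ordinal) + 1) := by rw [mul_add_one]
          _ ≤ ω ^ e * ((m + n : ℕ) : Ordinal) := by
              apply mul_le_mul_right
              have : (((m + k : ℕ) : Ordinal) + 1) = ((m + k + 1 : ℕ) : Ordinal) := by push_cast; ring
              rw [this]
              exact Nat.cast_le.2 (by omega)
          _ ≤ ω ^ e * ((m + n : ℕ) : Ordinal) + (a ♯ b) := le_self_add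
      · exact add_lt_add_right (nadd_lt_nadd_left hcb a) _
    have heq := IH (ω ^ e * ((m + n : ℕ) : Ordinal) + (a ♯ b)) hμ m k a c ha hc hlt
    rw [heq]; exact hlt
  apply le_antisymm
  · rw [nadd_le_iff]
    constructor
    · intro x hx
      obtain ⟨k, c, hc, rfl, hkc⟩ := decomp_lt m ha hx
      exact key₁ k c hc hkc
    · intro y hy
      obtain ⟨k, c, hc, rfl, hkc⟩ := decomp_lt n hb hy
      exact key₂ k c hc hkc
  · apply le_of_forall_lt
    intro x hx
    rcases lt_or_ge x (ω ^ e * ((m + n : ℕ) : Ordinal)) with h | h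
    · refine h.trans_le ?_
      calc ω ^ e * ((m + n : ℕ) : Ordinal) = ω ^ e * m + ω ^ e * n := by
            push_cast; rw [mul_add]
        _ ≤ (ω ^ e * m + a) + (ω ^ e * n + b) := add_le_add (le_self_add) (le_self_add)
        _ ≤ _ := add_le_nadd _ _
    · have hxe : x = ω ^ e * ((m + n : ℕ) : Ordinal) + (x - ω ^ e * ((m + n : ℕ) : Ordinal)) :=
        (Ordinal.add_sub_cancel_of_le h).symm
      set y := x - ω ^ e * ((m + n : ℕ) : Ordinal) with hy
      have hylt : y < a ♯ b := by
        rw [hxe] at hx; exact (add_lt_add_iff_left _).1 hx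
      rcases lt_nadd_iff.1 hylt with ⟨a', ha', hya⟩ | ⟨b', hb', hyb⟩
      · have heq := IH (ω ^ e * ((m + n : ℕ) : Ordinal) + (a ♯ b)) hμ m n a' b
          (ha'.trans ha) hb (add_lt_add_right (nadd_lt_nadd_right ha' b) _)
        calc x = ω ^ e * ((m + n : ℕ) : Ordinal) + y := hxe
          _ ≤ ω ^ e * ((m + n : ℕ) : Ordinal) + (a' ♯ b) := add_le_add_right hya _
          _ = (ω ^ e * m + a') ♯ (ω ^ e * n + b) := heq.symm
          _ < (ω ^ e * m + a) ♯ (ω ^ e * n + b) :=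
              nadd_lt_nadd_right (add_lt_add_right ha' _) _
      · have heq := IH (ω ^ e * ((m + n : ℕ) : Ordinal) + (a ♯ b)) hμ m n a b'
          ha (hb'.trans hb) (add_lt_add_right (nadd_lt_nadd_left hb' a) _)
        calc x = ω ^ e * ((m + n : ℕ) : Ordinal) + y := hxe
          _ ≤ ω ^ e * ((m + n : ℕ) : Ordinal) + (a ♯ b') := add_le_add_right hyb _
          _ = (ω ^ e * m + a) ♯ (ω ^ e * n + b') := heq.symm
          _ < (ω ^ e * m + a) ♯ (ω ^ e * n + b) :=
              nadd_lt_nadd_left (add_lt_add_right hb' _) _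

private theorem omega_principal : ∀ e a b : Ordinal.{0}, a < ω ^ e → b < ω ^ e → a ♯ b < ω ^ e := by
  intro e
  induction e using Ordinal.induction with
  | h e IH =>
  intro a b ha hb
  rcases Ordinal.zero_or_succ_or_isSuccLimit e with rfl | ⟨f, rfl⟩ | hlim
  · rw [opow_zero, Ordinal.lt_one_iff_zero] at ha hb
    subst ha; subst hb
    simpa [nadd_zero] using opow_pos (0 : Ordinal.{0}) omega0_pos
  · have hωf : (0 : Ordinal) < ω ^ f := opow_pos f omega0_pos
    rw [opow_succ] at ha hb ⊢
    obtain ⟨m', hm', ham⟩ := (lt_mul_iff_of_isSuccLimit isSuccLimit_omega0).1 ha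
    obtain ⟨m, rfl⟩ := lt_omega0.1 hm'
    obtain ⟨n', hn', hbn⟩ := (lt_mul_iff_of_isSuccLimit isSuccLimit_omega0).1 hb
    obtain ⟨n, rfl⟩ := lt_omega0.1 hn'
    have h2 := nadd_merge_aux f (IH f (Order.lt_succ f)) _ m n 0 0 hωf hωf (lt_add1 _)
    simp only [add_zero, nadd_zero] at h2
    calc a ♯ b < (ω ^ f * m) ♯ b := nadd_lt_nadd_right ham b
      _ ≤ (ω ^ f * m) ♯ (ω ^ f * n) := nadd_le_nadd_left hbn.le _
      _ = ω ^ f * ((m + n : ℕ) : Ordinal) := h2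
      _ < ω ^ f * ω := mul_lt_mul_of_pos_left (nat_lt_omega0 _) hωf
  · obtain ⟨ea, hea, haa⟩ := (Ordinal.lt_opow_of_isSuccLimit omega0_ne_zero hlim).1 ha
    obtain ⟨eb, heb, hbb⟩ := (Ordinal.lt_opow_of_isSuccLimit omega0_ne_zero hlim).1 hb
    have hf : max ea eb < e := max_lt hea heb
    have h := IH _ hf a b
      (haa.trans_le (opow_le_opow_right omega0_pos (le_max_left _ _)))
      (hbb.trans_le (opow_le_opow_right omega0_pos (le_max_right _ _)))
    exact h.trans_le (opow_le_opow_right omega0_pos hf.le)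

private theorem nadd_merge (e : Ordinal.{0}) (m n : ℕ) {a b : Ordinal.{0}}
    (ha : a < ω ^ e) (hb : b < ω ^ e) :
    (ω ^ e * m + a) ♯ (ω ^ e * n + b) = ω ^ e * ((m + n : ℕ) : Ordinal) + (a ♯ b) :=
  nadd_merge_aux e (omega_principal e) _ m n a b ha hb (lt_add1 _)

private theorem nadd_omega_opow_eq {e b : Ordinal.{0}} (hb : b < ω ^ (e + 1)) :
    ω ^ e ♯ b = ω ^ e + b := by
  have hω : (0 : Ordinal) < ω ^ e := opow_pos e omega0_pos
  rw [add_one_eq_succ, opow_succ] at hb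
  obtain ⟨n, hn⟩ := lt_omega0.1 ((Ordinal.div_lt hω.ne').2 hb)
  have hmod := Ordinal.mod_lt b hω.ne'
  have hdm := Ordinal.div_add_mod b (ω ^ e)
  have h := nadd_merge e 1 n hω hmod
  rw [Nat.cast_one, mul_one, add_zero, zero_nadd] at h
  rw [hn] at hdm
  rw [← hdm, h]
  have : ((1 + n : ℕ) : Ordinal) = 1 + (n : Ordinal) := by push_cast; ring
  rw [this, mul_add, mul_one, add_assoc]

/-! ### Facts about `eps0` -/

private theorem omega0_opow_eps0 : ω ^ eps0 = eps0 := by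
  have h : Set.Nonempty {a : Ordinal.{0} | ω ^ a = a} :=
    ⟨nfp (fun x => ω ^ x) 0, nfp_fp (isNormal_opow one_lt_omega0) 0⟩
  unfold eps0
  exact csInf_mem h

private theorem lt_opow_self_of_lt_eps0 {a : Ordinal.{0}} (h : a < eps0) : a < ω ^ a := by
  rcases (right_le_opow a one_lt_omega0).lt_or_eq with hlt | heq
  · exact hlt
  · exact absurd h (not_lt.2 (csInf_le' (show ω ^ a = a from heq.symm)))

private theorem one_lt_eps0 : (1 : Ordinal.{0}) < eps0 := by
  by_contra h
  push_neg at h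
  rcases Ordinal.le_one_iff.1 h with h0 | h1
  · have := omega0_opow_eps0
    rw [h0, opow_zero] at this
    exact one_ne_zero this
  · have := omega0_opow_eps0
    rw [h1, opow_one] at this
    exact (one_lt_omega0.ne') this

private theorem opow_lt_eps0 {a : Ordinal.{0}} (h : a < eps0) : ω ^ a < eps0 := by
  conv_rhs => rw [← omega0_opow_eps0]
  exact (opow_lt_opow_iff_right one_lt_omega0).2 h

private theorem nadd_lt_eps0 {a b : Ordinal.{0}} (ha : a < eps0) (hb : b < eps0) :
    a ♯ b < eps0 := by
  have hm : max a b < eps0 := max_lt ha hb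
  have h := omega_principal (max a b) a b
    ((le_max_left a b).trans_lt (lt_opow_self_of_lt_eps0 hm))
    ((le_max_right a b).trans_lt (lt_opow_self_of_lt_eps0 hm))
  exact h.trans (opow_lt_eps0 hm)

/-! ### Basic facts about the rank -/

private theorem R_N : R .N = 1 := by rw [SType.R.eq_1]

private theorem R_prod (a b : SType) : R (.prod a b) = R a ♯ R b := by rw [SType.R.eq_2]

private theorem R_arrow_N (a : SType) : R (.arrow a .N) = ω ^ R a := by rw [SType.R.eq_3]

private theorem R_arrow_prod (a b c : SType) :
    R (.arrow a (.prod b c)) = R (.arrow a b) ♯ R (.arrow a c) := by rw [SType.R.eq_4]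

private theorem R_arrow_arrow (a b c : SType) :
    R (.arrow a (.arrow b c)) = R (.arrow (.prod a b) c) := by rw [SType.R.eq_5]

private theorem R_pos (σ : SType) : 0 < R σ := by
  induction σ using SType.R.induct with
  | case1 => rw [R_N]; exact zero_lt_one
  | case2 a b iha ihb => rw [R_prod]; exact iha.trans_le (self_le_nadd _ _)
  | case3 a iha => rw [R_arrow_N]; exact opow_pos _ omega0_pos
  | case4 a b c ih1 ih2 => rw [R_arrow_prod]; exact ih1.trans_le (self_le_nadd _ _)
  | case5 a b c ih => rw [R_arrow_arrow]; exact ih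

private theorem R_lt_eps0 (σ : SType) : R σ < eps0 := by
  induction σ using SType.R.induct with
  | case1 => rw [R_N]; exact one_lt_eps0
  | case2 a b iha ihb => rw [R_prod]; exact nadd_lt_eps0 iha ihb
  | case3 a iha => rw [R_arrow_N]; exact opow_lt_eps0 iha
  | case4 a b c ih1 ih2 => rw [R_arrow_prod]; exact nadd_lt_eps0 ih1 ih2
  | case5 a b c ih => rw [R_arrow_arrow]; exact ih

private theorem R_arrow_left : ∀ (b a a' : SType), R a = R a' →
    R (.arrow a b) = R (.arrow a' b) := by
  intro b
  induction b with
  | N => intro a a' h; rw [R_arrow_N, R_arrow_N, h]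
  | prod c d ihc ihd =>
      intro a a' h; rw [R_arrow_prod, R_arrow_prod, ihc _ _ h, ihd _ _ h]
  | arrow c d ihc ihd =>
      intro a a' h
      rw [R_arrow_arrow, R_arrow_arrow]
      exact ihd _ _ (by rw [R_prod, R_prod, h])

/-! ### Soundness: trivially isomorphic types have the same rank -/

private theorem R_sound_aux {σ τ : SType} (h : TrivIso σ τ) :
    (∀ a, R (.arrow a σ) = R (.arrow a τ)) ∧ R σ = R τ := by
  induction h with
  | refl σ => exact ⟨fun _ => rfl, rfl⟩
  | symm h ih => exact ⟨fun a => (ih.1 a).symm, ih.2.symm⟩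
  | trans h1 h2 ih1 ih2 => exact ⟨fun a => (ih1.1 a).trans (ih2.1 a), ih1.2.trans ih2.2⟩
  | @arrowCongr σ σ' τ τ' h1 h2 ih1 ih2 =>
      constructor
      · intro x
        rw [R_arrow_arrow, R_arrow_arrow,
          R_arrow_left τ (.prod x σ) (.prod x σ') (by rw [R_prod, R_prod, ih1.2])]
        exact ih2.1 _
      · rw [R_arrow_left τ σ σ' ih1.2]
        exact ih2.1 _
  | prodCongr h1 h2 ih1 ih2 =>
      exact ⟨fun x => by rw [R_arrow_prod, R_arrow_prod, ih1.1 x, ih2.1 x],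
        by rw [R_prod, R_prod, ih1.2, ih2.2]⟩
  | curry ρ σ τ =>
      constructor
      · intro x
        rw [R_arrow_arrow, R_arrow_arrow, R_arrow_arrow]
        exact R_arrow_left τ (.prod x (.prod ρ σ)) (.prod (.prod x ρ) σ)
          (by rw [R_prod, R_prod, R_prod, R_prod, nadd_assoc])
      · rw [R_arrow_arrow]
  | distrib ρ σ τ =>
      constructor
      · intro x
        simp only [R_arrow_arrow, R_arrow_prod]
      · rw [R_arrow_prod, R_prod]
  | assoc ρ σ τ =>
      exact ⟨fun x => by simp only [R_arrow_prod]; exact (nadd_assoc _ _ _).symm,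
        by simp only [R_prod]; exact (nadd_assoc _ _ _).symm⟩
  | comm σ τ =>
      exact ⟨fun x => by simp only [R_arrow_prod]; exact nadd_comm _ _,
        by simp only [R_prod]; exact nadd_comm _ _⟩

private theorem R_sound {σ τ : SType} (h : TrivIso σ τ) : R σ = R τ := (R_sound_aux h).2

/-! ### Decomposition of a type into a maximal head factor and a rest -/

private def Head (e : Ordinal.{0}) (f : SType) : Prop :=
  (e = 0 ∧ f = .N) ∨ ∃ a, f = .arrow a .N ∧ R a = e

private theorem Head.R_eq {e : Ordinal.{0}} {f : SType} (h : Head e f) : R f = ω ^ e := by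
  rcases h with ⟨rfl, rfl⟩ | ⟨a, rfl, rfl⟩
  · rw [R_N, opow_zero]
  · rw [R_arrow_N]

private def DecP (σ : SType) : Prop :=
  ∃ (e : Ordinal.{0}) (f : SType), Head e f ∧
    (TrivIso σ f ∨ ∃ ρ, TrivIso σ (.prod f ρ) ∧ R ρ < ω ^ (e + 1))

private theorem DecP.of_iso {σ τ : SType} (h : TrivIso σ τ) (hd : DecP τ) : DecP σ := by
  obtain ⟨e, f, hf, hc | ⟨ρ, hρ, hρlt⟩⟩ := hd
  · exact ⟨e, f, hf, Or.inl (h.trans hc)⟩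
  · exact ⟨e, f, hf, Or.inr ⟨ρ, h.trans hρ, hρlt⟩⟩

private theorem DecP.prod_le {σ x y : SType} {ex ey : Ordinal.{0}} {fx fy : SType}
    (hfx : Head ex fx) (hfy : Head ey fy)
    (hcx : TrivIso x fx ∨ ∃ ρ, TrivIso x (.prod fx ρ) ∧ R ρ < ω ^ (ex + 1))
    (hcy : TrivIso y fy ∨ ∃ ρ, TrivIso y (.prod fy ρ) ∧ R ρ < ω ^ (ey + 1))
    (hle : ey ≤ ex) (hσ : TrivIso σ (.prod x y)) : DecP σ := by
  have hom_lt : ∀ e : Ordinal.{0}, ω ^ e < ω ^ (e + 1) :=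
    fun e => (opow_lt_opow_iff_right one_lt_omega0).2 (lt_add1 e)
  refine ⟨ex, fx, hfx, Or.inr ?_⟩
  have hRy : R y < ω ^ (ex + 1) := by
    have hy1 : R y < ω ^ (ey + 1) := by
      rcases hcy with h | ⟨ρ, h, hρ⟩
      · rw [R_sound h, hfy.R_eq]; exact hom_lt ey
      · rw [R_sound h, R_prod, hfy.R_eq]
        exact omega_principal _ _ _ (hom_lt ey) hρ
    exact hy1.trans_le (opow_le_opow_right omega0_pos (add_le_add_left hle 1))
  rcases hcx with h | ⟨ρ, h, hρ⟩
  · exact ⟨y, hσ.trans (TrivIso.prodCongr h (TrivIso.refl y)), hRy⟩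
  · refine ⟨.prod ρ y, ?_, ?_⟩
    · exact hσ.trans ((TrivIso.prodCongr h (TrivIso.refl y)).trans
        (TrivIso.assoc fx ρ y).symm)
    · rw [R_prod]; exact omega_principal _ _ _ hρ hRy

private theorem DecP.prod {σ x y : SType} (hx : DecP x) (hy : DecP y)
    (hσ : TrivIso σ (.prod x y)) : DecP σ := by
  obtain ⟨ex, fx, hfx, hcx⟩ := hx
  obtain ⟨ey, fy, hfy, hcy⟩ := hy
  rcases le_total ey ex with h | h
  · exact DecP.prod_le hfx hfy hcx hcy h hσ
  · exact DecP.prod_le hfy hfx hcy hcx h (hσ.trans (TrivIso.comm x y))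

private theorem decP_all (σ : SType) : DecP σ := by
  induction σ using SType.R.induct with
  | case1 => exact ⟨0, .N, Or.inl ⟨rfl, rfl⟩, Or.inl (TrivIso.refl _)⟩
  | case2 a b iha ihb => exact DecP.prod iha ihb (TrivIso.refl _)
  | case3 a _ => exact ⟨R a, .arrow a .N, Or.inr ⟨a, rfl, rfl⟩, Or.inl (TrivIso.refl _)⟩
  | case4 a b c ih1 ih2 => exact DecP.prod ih1 ih2 (TrivIso.distrib a b c)
  | case5 a b c ih => exact DecP.of_iso (TrivIso.curry a b c).symm ih

private theorem R_bounds {σ : SType} {e : Ordinal.{0}} {f : SType} (hf : Head e f)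
    (hc : TrivIso σ f ∨ ∃ ρ, TrivIso σ (.prod f ρ) ∧ R ρ < ω ^ (e + 1)) :
    ω ^ e ≤ R σ ∧ R σ < ω ^ (e + 1) := by
  have hom_lt : ω ^ e < ω ^ (e + 1) := (opow_lt_opow_iff_right one_lt_omega0).2 (lt_add1 e)
  rcases hc with h | ⟨ρ, h, hρ⟩
  · rw [R_sound h, hf.R_eq]; exact ⟨le_rfl, hom_lt⟩
  · rw [R_sound h, R_prod, hf.R_eq]
    exact ⟨self_le_nadd _ _, omega_principal _ _ _ hom_lt hρ⟩

/-! ### Injectivity: equal ranks imply trivial isomorphism -/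

private theorem R_inj : ∀ r : Ordinal.{0}, ∀ σ τ : SType, R σ = r → R τ = r → TrivIso σ τ := by
  intro r
  induction r using Ordinal.induction with
  | h r IH =>
  intro σ τ hσ hτ
  obtain ⟨e₁, f₁, hf₁, hc₁⟩ := decP_all σ
  obtain ⟨e₂, f₂, hf₂, hc₂⟩ := decP_all τ
  obtain ⟨hl₁, hu₁⟩ := R_bounds hf₁ hc₁
  obtain ⟨hl₂, hu₂⟩ := R_bounds hf₂ hc₂
  rw [hσ] at hl₁ hu₁
  rw [hτ] at hl₂ hu₂
  have he : e₁ = e₂ := by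
    have h1 : e₁ < e₂ + 1 := (opow_lt_opow_iff_right one_lt_omega0).1 (hl₁.trans_lt hu₂)
    have h2 : e₂ < e₁ + 1 := (opow_lt_opow_iff_right one_lt_omega0).1 (hl₂.trans_lt hu₁)
    rw [add_one_eq_succ, Order.lt_succ_iff] at h1 h2
    exact le_antisymm h1 h2
  subst he
  have hr_eps : r < eps0 := hσ ▸ R_lt_eps0 σ
  have her : e₁ < r := by
    refine lt_of_lt_of_le ?_ hl₁
    exact lt_opow_self_of_lt_eps0
      (lt_of_le_of_lt (le_trans (right_le_opow e₁ one_lt_omega0) hl₁) hr_eps)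
  have hff : TrivIso f₁ f₂ := by
    rcases hf₁ with ⟨he0, rfl⟩ | ⟨a, rfl, ha⟩
    · rcases hf₂ with ⟨-, rfl⟩ | ⟨b, rfl, hb⟩
      · exact TrivIso.refl _
      · exact absurd (he0 ▸ hb) (R_pos b).ne'
    · rcases hf₂ with ⟨he0, rfl⟩ | ⟨b, rfl, hb⟩
      · exact absurd (he0 ▸ ha) (R_pos a).ne'
      · exact TrivIso.arrowCongr (IH e₁ her a b ha hb) (TrivIso.refl .N)
  rcases hc₁ with h1 | ⟨ρ₁, h1, hρ₁⟩ <;> rcases hc₂ with h2 | ⟨ρ₂, h2, hρ₂⟩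
  · exact h1.trans (hff.trans h2.symm)
  · exfalso
    have e1 : ω ^ e₁ = r := by rw [← hσ, R_sound h1, hf₁.R_eq]
    have e2 : ω ^ e₁ ♯ R ρ₂ = r := by rw [← hτ, R_sound h2, R_prod, hf₂.R_eq]
    have : ω ^ e₁ ♯ (0 : Ordinal) = ω ^ e₁ ♯ R ρ₂ := by rw [nadd_zero, e2]; exact e1
    exact (R_pos ρ₂).ne' (nadd_left_cancel this).symm
  · exfalso
    have e1 : ω ^ e₁ ♯ R ρ₁ = r := by rw [← hσ, R_sound h1, R_prod, hf₁.R_eq]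
    have e2 : ω ^ e₁ = r := by rw [← hτ, R_sound h2, hf₂.R_eq]
    have : ω ^ e₁ ♯ (0 : Ordinal) = ω ^ e₁ ♯ R ρ₁ := by rw [nadd_zero, e1]; exact e2
    exact (R_pos ρ₁).ne' (nadd_left_cancel this).symm
  · have e1 : ω ^ e₁ ♯ R ρ₁ = r := by rw [← hσ, R_sound h1, R_prod, hf₁.R_eq]
    have e2 : ω ^ e₁ ♯ R ρ₂ = r := by rw [← hτ, R_sound h2, R_prod, hf₂.R_eq]
    have hRρ : R ρ₁ = R ρ₂ := nadd_left_cancel (e1.trans e2.symm)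
    have hρr : R ρ₁ < r := by
      rw [← e1]
      calc R ρ₁ = 0 ♯ R ρ₁ := (zero_nadd _).symm
        _ < ω ^ e₁ ♯ R ρ₁ := nadd_lt_nadd_right (opow_pos _ omega0_pos) _
    have hρr2 : R ρ₂ < r := hRρ ▸ hρr
    exact h1.trans ((TrivIso.prodCongr hff (IH _ hρr2 ρ₁ ρ₂ hRρ rfl)).trans h2.symm)

/-! ### Surjectivity onto `(0, eps0)` -/

private theorem R_surj : ∀ α : Ordinal.{0}, 0 < α → α < eps0 → ∃ σ : SType, R σ = α := by
  intro α
  induction α using Ordinal.induction with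
  | h α IH =>
  intro h0 hε
  set e := log ω α with he
  have hω : (0 : Ordinal) < ω ^ e := opow_pos e omega0_pos
  have hle : ω ^ e ≤ α := opow_log_le_self ω h0.ne'
  have hlt : α < ω ^ (e + 1) := by
    rw [add_one_eq_succ]; exact lt_opow_succ_log_self one_lt_omega0 α
  have hεe : e < eps0 := lt_of_le_of_lt (le_trans (right_le_opow e one_lt_omega0) hle) hε
  obtain ⟨hd, hh⟩ : ∃ hd : SType, R hd = ω ^ e := by
    rcases eq_or_ne e 0 with he0 | he0
    · exact ⟨.N, by rw [R_N, he0, opow_zero]⟩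
    · obtain ⟨a, ha⟩ := IH e (lt_of_lt_of_le (lt_opow_self_of_lt_eps0 hεe) hle)
        (pos_iff_ne_zero.2 he0) hεe
      exact ⟨.arrow a .N, by rw [R_arrow_N, ha]⟩
  have hlt' : α < ω ^ e * ω := by rwa [add_one_eq_succ, opow_succ] at hlt
  obtain ⟨q, hq⟩ := lt_omega0.1 ((Ordinal.div_lt hω.ne').2 hlt')
  have hs : α % ω ^ e < ω ^ e := Ordinal.mod_lt α hω.ne'
  have hdm : ω ^ e * (α / ω ^ e) + α % ω ^ e = α := Ordinal.div_add_mod α (ω ^ e)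
  set s := α % ω ^ e with hsdef
  rw [hq] at hdm
  have hq1 : q ≠ 0 := by
    rintro rfl
    rw [Nat.cast_zero, mul_zero, zero_add] at hdm
    rw [← hdm] at hle
    exact absurd hle (not_le.2 hs)
  obtain ⟨n, rfl⟩ := Nat.exists_eq_succ_of_ne_zero hq1
  simp only [Nat.succ_eq_add_one] at hdm hq
  by_cases hrest : (n : Ordinal) = 0 ∧ s = 0
  · refine ⟨hd, ?_⟩
    rw [hh, ← hdm, hrest.2, add_zero]
    have : ((n + 1 : ℕ) : Ordinal) = 1 := by
      have hn : (n : Ordinal) = 0 := hrest.1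
      push_cast
      rw [hn, zero_add]
    rw [this, mul_one]
  · have hα : α = ω ^ e + (ω ^ e * n + s) := by
      rw [← hdm]
      have : ((n + 1 : ℕ) : Ordinal) = 1 + (n : Ordinal) := by
        rw [Nat.add_comm]; push_cast; rfl
      rw [this, mul_add, mul_one, add_assoc]
    have hr'unit : ω ^ e * n + s < ω ^ e * ((n + 1 : ℕ) : Ordinal) := by
      have : ((n + 1 : ℕ) : Ordinal) = (n : Ordinal) + 1 := by push_cast; rfl
      rw [this, mul_add_one]
      exact add_lt_add_right hs _
    have hr'α : ω ^ e * n + s < α := by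
      refine hr'unit.trans_le ?_
      rw [← hdm]
      exact le_self_add
    have hr'pos : 0 < ω ^ e * n + s := by
      rcases eq_or_ne (n : Ordinal) 0 with hn0 | hn0
      · have hs0 : s ≠ 0 := fun h => hrest ⟨hn0, h⟩
        rw [hn0, mul_zero, zero_add]
        exact pos_iff_ne_zero.2 hs0
      · calc (0 : Ordinal) < ω ^ e * n := by
              apply mul_pos hω
              exact pos_iff_ne_zero.2 hn0
          _ ≤ ω ^ e * n + s := le_self_add
    obtain ⟨ρ, hρ⟩ := IH _ hr'α hr'pos (hr'α.trans hε)
    refine ⟨.prod hd ρ, ?_⟩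
    rw [R_prod, hh, hρ, hα]
    refine nadd_omega_opow_eq ?_
    refine hr'unit.trans ?_
    rw [add_one_eq_succ, opow_succ]
    exact mul_lt_mul_of_pos_left (nat_lt_omega0 _) hω


/-- The rank induces an order isomorphism between the quotient of the simple
types by trivial isomorphism (ordered by the relation induced by `≼`, i.e. by
comparison of ranks) and the ordinals `α` with `0 < α < ε₀`; in particular `≼`
induces a well-ordering of order type `ε₀` on the `∼`-classes. -/
theorem quotient_orderIso_ordinals_below_eps0 :
    ∃ f : Quotient trivSetoid ≃ {α : Ordinal // 0 < α ∧ α < eps0},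
      ∀ σ τ : SType,
        (R σ ≤ R τ) ↔ (f (Quotient.mk trivSetoid σ) ≤ f (Quotient.mk trivSetoid τ)) := by
  let g : Quotient trivSetoid → {α : Ordinal // 0 < α ∧ α < eps0} :=
    Quotient.lift (fun σ => ⟨R σ, R_pos σ, R_lt_eps0 σ⟩)
      (fun σ τ h => Subtype.ext (R_sound h))
  have hg : ∀ σ : SType, g (Quotient.mk trivSetoid σ) = ⟨R σ, R_pos σ, R_lt_eps0 σ⟩ :=
    fun σ => rfl
  have hbij : Function.Bijective g := by
    constructor
    · intro x y
      refine Quotient.inductionOn₂ x y ?_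
      intro σ τ h
      apply Quotient.sound
      have hRστ : R σ = R τ := congrArg Subtype.val h
      exact R_inj (R τ) σ τ hRστ rfl
    · rintro ⟨α, h0, hε⟩
      obtain ⟨σ, hσ⟩ := R_surj α h0 hε
      exact ⟨Quotient.mk trivSetoid σ, Subtype.ext hσ⟩
  refine ⟨Equiv.ofBijective g hbij, fun σ τ => ?_⟩
  have h1 : (Equiv.ofBijective g hbij) (Quotient.mk trivSetoid σ) = ⟨R σ, R_pos σ, R_lt_eps0 σ⟩ := hg σ
  have h2 : (Equiv.ofBijective g hbij) (Quotient.mk trivSetoid τ) = ⟨R τ, R_pos τ, R_lt_eps0 τ⟩ := hg τ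
  rw [h1, h2, Subtype.mk_le_mk]
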